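/- For μ > 0 and σ > 0, with θ = 2μ/σ², g(x) = (1-x)/μ - σ²(e^{-θx} - e^{-θ})/(2μ²), and p(x) = θ(e^{θ} - e^{θx})/(1 + θe^{θ} - e^{θ}), the identity g(0) · ∫₀¹ σ² (g'(x))² p(x) dx = e^{-θ}(e^{-θ} - 5e^{θ} + 2θe^{θ} + 4 + 4θ)/(μ²θ²) holds. -/

import Mathlib

lemma hasDeriv_expc (c x : ℝ) :
    HasDerivAt (fun y : ℝ => Real.exp (c * y)) (c * Real.exp (c * x)) x := by
  simpa [mul_comm] using ((hasDerivAt_id x).const_mul c).exp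

theorem stmt_11 (μ σ : ℝ) (hμ : 0 < μ) (hσ : 0 < σ) (θ : ℝ) (hθ : θ = 2 * μ / σ ^ 2)
    (g p : ℝ → ℝ)
    (hg : ∀ x, g x = (1 - x) / μ -
      σ ^ 2 * (Real.exp (-(θ * x)) - Real.exp (-θ)) / (2 * μ ^ 2))
    (hp : ∀ x, p x = θ * (Real.exp θ - Real.exp (θ * x)) /
      (1 + θ * Real.exp θ - Real.exp θ)) :
    g 0 * ∫ x in (0:ℝ)..1, σ ^ 2 * (deriv g x) ^ 2 * p x =
      Real.exp (-θ) * (Real.exp (-θ) - 5 * Real.exp θ + 2 * θ * Real.exp θ + 4 + 4 * θ) /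
        (μ ^ 2 * θ ^ 2) := by
  have hθ0 : 0 < θ := by rw [hθ]; positivity
  have hθne : θ ≠ 0 := ne_of_gt hθ0
  have hμne : μ ≠ 0 := ne_of_gt hμ
  have hσ2 : σ ^ 2 = 2 * μ / θ := by
    rw [hθ]; field_simp
  set E := Real.exp θ with hE
  have hEpos : 0 < E := Real.exp_pos θ
  have hEne : E ≠ 0 := ne_of_gt hEpos
  have hD : 0 < 1 + θ * E - E := by
    have h := Real.add_one_lt_exp (x := -θ) (by simpa using hθne)
    rw [Real.exp_neg] at h
    have h2 : (-θ + 1) * E < 1 := by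
      calc (-θ + 1) * E < E⁻¹ * E := by
            apply mul_lt_mul_of_pos_right h hEpos
        _ = 1 := inv_mul_cancel₀ hEne
    nlinarith
  have hDne : (1 + θ * E - E) ≠ 0 := ne_of_gt hD
  -- derivative of g
  have hgd : ∀ x : ℝ, deriv g x = (Real.exp (-(θ * x)) - 1) / μ := by
    intro x
    have hfun : g = fun x => (1 - x) / μ -
        σ ^ 2 * (Real.exp (-(θ * x)) - Real.exp (-θ)) / (2 * μ ^ 2) := funext hg
    have hA : HasDerivAt (fun x : ℝ => (1 - x) / μ) (-1 / μ) x := by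
      have := ((hasDerivAt_const x (1:ℝ)).sub (hasDerivAt_id x)).div_const μ
      simpa using this
    have hB : HasDerivAt (fun x : ℝ =>
        σ ^ 2 * (Real.exp (-(θ * x)) - Real.exp (-θ)) / (2 * μ ^ 2))
        (σ ^ 2 * (-θ * Real.exp (-(θ * x))) / (2 * μ ^ 2)) x := by
      have h1 : HasDerivAt (fun y : ℝ => Real.exp (-(θ * y)))
          (-θ * Real.exp (-(θ * x))) x := by
        have := hasDeriv_expc (-θ) x
        simpa [neg_mul] using this
      exact ((h1.sub_const (Real.exp (-θ))).const_mul (σ ^ 2)).div_const (2 * μ ^ 2)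
    have hAB : HasDerivAt (fun x : ℝ => (1 - x) / μ - σ ^ 2 * (Real.exp (-(θ * x)) - Real.exp (-θ)) / (2 * μ ^ 2)) (-1 / μ - σ ^ 2 * (-θ * Real.exp (-(θ * x))) / (2 * μ ^ 2)) x := hA.sub hB
    rw [hfun, hAB.deriv, hσ2]
    field_simp
    ring
  set K : ℝ := 2 / (μ * (1 + θ * E - E)) with hK
  set f₁ : ℝ → ℝ := fun x => K * (E * Real.exp (-(2 * θ) * x)
      - (1 + 2 * E) * Real.exp (-θ * x) + (2 + E) - Real.exp (θ * x)) with hf₁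
  have hfeq : ∀ x : ℝ, σ ^ 2 * (deriv g x) ^ 2 * p x = f₁ x := by
    intro x
    rw [hgd x, hp x, hσ2]; simp only [hf₁]
    have hx : Real.exp (-(2 * θ) * x) = Real.exp (-(θ * x)) * Real.exp (-(θ * x)) := by
      rw [← Real.exp_add]; ring_nf
    have hx2 : Real.exp (-θ * x) = Real.exp (-(θ * x)) := by ring_nf
    have hv : Real.exp (-(θ * x)) = (Real.exp (θ * x))⁻¹ := by
      rw [← Real.exp_neg]
    rw [hx, hx2, hv, hK]
    have hu : Real.exp (θ * x) ≠ 0 := (Real.exp_pos _).ne'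
    field_simp
    ring
  set F : ℝ → ℝ := fun x => K * (-(E * Real.exp (-(2 * θ) * x)) / (2 * θ)
      + (1 + 2 * E) * Real.exp (-θ * x) / θ + (2 + E) * x - Real.exp (θ * x) / θ) with hF
  have hFd : ∀ x ∈ Set.uIcc (0:ℝ) 1, HasDerivAt F (f₁ x) x := by
    intro x _
    have h1 := ((hasDeriv_expc (-(2 * θ)) x).const_mul E).neg.div_const (2 * θ)
    have h2 := ((hasDeriv_expc (-θ) x).const_mul (1 + 2 * E)).div_const θ
    have h3 : HasDerivAt (fun y : ℝ => (2 + E) * y) (2 + E) x := by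
      simpa using (hasDerivAt_id x).const_mul (2 + E)
    have h4 := (hasDeriv_expc θ x).div_const θ
    have h := (((h1.add h2).add h3).sub h4).const_mul K
    simp only [hF, hf₁]
    refine h.congr_deriv ?_
    field_simp
    ring
  have hcont : Continuous f₁ := by
    rw [hf₁]; fun_prop
  have hint : (∫ x in (0:ℝ)..1, σ ^ 2 * (deriv g x) ^ 2 * p x) = F 1 - F 0 := by
    rw [intervalIntegral.integral_congr (g := f₁) (fun x _ => hfeq x)]
    exact intervalIntegral.integral_eq_sub_of_hasDerivAt hFd
      (hcont.intervalIntegrable 0 1)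
  rw [hint, hg 0, hσ2, hF]
  have e1 : Real.exp (-θ * 1) = E⁻¹ := by
    rw [mul_one, Real.exp_neg]
  have e2 : Real.exp (-(2 * θ) * 1) = (E ^ 2)⁻¹ := by
    rw [mul_one, Real.exp_neg]
    congr 1
    rw [two_mul, Real.exp_add, sq]
  have e3 : Real.exp (θ * 1) = E := by rw [mul_one]
  have e4 : Real.exp (-(2 * θ) * 0) = 1 := by simp
  have e5 : Real.exp (-θ * 0) = 1 := by simp
  have e6 : Real.exp ((θ:ℝ) * 0) = 1 := by simp
  have e7 : Real.exp (-(θ * 0)) = 1 := by simp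
  have e8 : Real.exp (-θ) = E⁻¹ := Real.exp_neg θ
  simp only [e1, e2, e3, e4, e5, e6, e7, e8, hK]
  field_simp
  ring
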